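/- Let X, Y, Z be real Banach spaces (local models of Banach manifolds), let f : Y → X and g : Z → X be continuously differentiable maps with f(y₀) = g(z₀) = x₀. Suppose the map df_{y₀} ⊕ (-dg_{z₀}) : Y × Z → X is surjective and its kernel K admits a closed complement Q. Then there exists a neighborhood of (y₀, z₀) in which the fibered product {(y,z) : f(y) = g(z)} is a C¹ Banach submanifold with tangent space at (y₀, z₀) equal to K. -/

import Mathlib

/-- Transversal fibered product of Banach manifolds is locally a `C¹` submanifold,
parametrized by a chart `φ` defined on the kernel `K` of `df ⊕ (-dg)`, whose derivative
at the base point is the inclusion of `K` (so the tangent space is `K`). -/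
theorem stmt_2 {X Y Z : Type*} [NormedAddCommGroup X] [NormedSpace ℝ X] [CompleteSpace X]
    [NormedAddCommGroup Y] [NormedSpace ℝ Y] [CompleteSpace Y]
    [NormedAddCommGroup Z] [NormedSpace ℝ Z] [CompleteSpace Z]
    (f : Y → X) (g : Z → X) (hf : ContDiff ℝ 1 f) (hg : ContDiff ℝ 1 g)
    (y₀ : Y) (z₀ : Z) (hpt : f y₀ = g z₀)
    (D : (Y × Z) →L[ℝ] X)
    (hD : D = (fderiv ℝ f y₀).comp (ContinuousLinearMap.fst ℝ Y Z)
        - (fderiv ℝ g z₀).comp (ContinuousLinearMap.snd ℝ Y Z))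
    (hsurj : Function.Surjective ⇑D)
    (hcompl : ∃ Q : Submodule ℝ (Y × Z), IsClosed (Q : Set (Y × Z)) ∧
        IsCompl (LinearMap.ker (D : (Y × Z) →ₗ[ℝ] X)) Q) :
    ∃ U : Set (Y × Z), IsOpen U ∧ (y₀, z₀) ∈ U ∧
      ∃ W : Set (LinearMap.ker (D : (Y × Z) →ₗ[ℝ] X)), IsOpen W ∧ (0 : LinearMap.ker (D : (Y × Z) →ₗ[ℝ] X)) ∈ W ∧
        ∃ φ : (LinearMap.ker (D : (Y × Z) →ₗ[ℝ] X)) → Y × Z,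
          ContDiffOn ℝ 1 φ W ∧ φ 0 = (y₀, z₀) ∧
          HasFDerivAt φ ((LinearMap.ker (D : (Y × Z) →ₗ[ℝ] X)).subtypeL) 0 ∧
          Set.InjOn φ W ∧
          φ '' W = {p : Y × Z | p ∈ U ∧ f p.1 = g p.2} := by
  classical
  obtain ⟨Q, hQc, hQcompl⟩ := hcompl
  set a : Y × Z := (y₀, z₀) with ha
  set h : Y × Z → X := fun p => f p.1 - g p.2 with hhdef
  have hhC : ContDiff ℝ 1 h := (hf.comp contDiff_fst).sub (hg.comp contDiff_snd)
  have hf1 : HasFDerivAt f (fderiv ℝ f y₀) y₀ := (hf.differentiable one_ne_zero y₀).hasFDerivAt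
  have hg1 : HasFDerivAt g (fderiv ℝ g z₀) z₀ := (hg.differentiable one_ne_zero z₀).hasFDerivAt
  have hDh : HasFDerivAt h D a := by
    rw [hD]
    exact (hf1.comp a hasFDerivAt_fst).sub (hg1.comp a hasFDerivAt_snd)
  have hstrict : HasStrictFDerivAt h D a :=
    hhC.contDiffAt.hasStrictFDerivAt' hDh one_ne_zero
  have hr : LinearMap.range (D : (Y × Z) →ₗ[ℝ] X) = ⊤ := LinearMap.range_eq_top.2 hsurj
  have hker : (LinearMap.ker (D : (Y × Z) →ₗ[ℝ] X)).ClosedComplemented :=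
    Submodule.ClosedComplemented.of_isCompl_isClosed hQcompl (ContinuousLinearMap.isClosed_ker D)
      hQc
  have h0 : h a = 0 := sub_eq_zero.mpr hpt
  set ψ : OpenPartialHomeomorph (Y × Z) (X × LinearMap.ker (D : (Y × Z) →ₗ[ℝ] X)) :=
    hstrict.implicitToOpenPartialHomeomorphOfComplemented h D hr hker with hψdef
  have haS : a ∈ ψ.source :=
    hstrict.mem_implicitToOpenPartialHomeomorphOfComplemented_source hr hker
  have hψa : ψ a = (0, 0) := by
    rw [hψdef, hstrict.implicitToOpenPartialHomeomorphOfComplemented_self hr hker, h0]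
  have h0T : ((0 : X), (0 : LinearMap.ker (D : (Y × Z) →ₗ[ℝ] X))) ∈ ψ.target := by
    rw [← hψa]; exact ψ.map_source haS
  have hsa : ψ.symm (0, 0) = a := by rw [← hψa]; exact ψ.left_inv haS
  -- smoothness of `ψ.symm` at `(0, 0)`
  have hψC : ContDiff ℝ 1 ψ := by
    have : ⇑ψ = fun p : Y × Z => (h p, Classical.choose hker (p - a)) := rfl
    rw [this]
    exact hhC.prodMk ((Classical.choose hker).contDiff.comp (contDiff_id.sub contDiff_const))
  have hψd : HasStrictFDerivAt ψ
      ((D.equivProdOfSurjectiveOfIsCompl (Classical.choose hker) hr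
        (LinearMap.range_eq_of_proj (Classical.choose_spec hker))
        (LinearMap.isCompl_of_proj (Classical.choose_spec hker)) :
          (Y × Z) →L[ℝ] X × LinearMap.ker (D : (Y × Z) →ₗ[ℝ] X))) a :=
    (HasStrictFDerivAt.implicitFunctionDataOfComplemented h D hstrict hr
      hker).hasStrictFDerivAt
  have hsymmC : ContDiffAt ℝ 1 ψ.symm ((0 : X), (0 : LinearMap.ker (D : (Y × Z) →ₗ[ℝ] X))) := by
    apply ψ.contDiffAt_symm h0T
    · rw [hsa]; exact hψd.hasFDerivAt
    · rw [hsa]; exact hψC.contDiffAt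
  set φ : LinearMap.ker (D : (Y × Z) →ₗ[ℝ] X) → Y × Z := fun k => ψ.symm ((0 : X), k) with hφdef
  have hφC : ContDiffAt ℝ 1 φ 0 :=
    hsymmC.comp 0 ((contDiff_const.prodMk contDiff_id).contDiffAt)
  obtain ⟨u, hu0, huC⟩ := hφC.contDiffOn le_rfl (by simp)
  set W : Set (LinearMap.ker (D : (Y × Z) →ₗ[ℝ] X)) :=
    interior u ∩ {k | ((0 : X), k) ∈ ψ.target} with hWdef
  have hWopen : IsOpen W :=
    isOpen_interior.inter (ψ.open_target.preimage (continuous_const.prodMk continuous_id))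
  have hW0 : (0 : LinearMap.ker (D : (Y × Z) →ₗ[ℝ] X)) ∈ W :=
    ⟨mem_interior_iff_mem_nhds.2 hu0, h0T⟩
  set U : Set (Y × Z) := ψ.source ∩ ψ ⁻¹' {q | q.2 ∈ W} with hUdef
  have hUopen : IsOpen U :=
    ψ.isOpen_inter_preimage (hWopen.preimage continuous_snd)
  have haU : a ∈ U := by
    refine ⟨haS, ?_⟩
    show (ψ a).2 ∈ W
    rw [hψa]; exact hW0
  refine ⟨U, hUopen, haU, W, hWopen, hW0, φ, ?_, hsa, ?_, ?_, ?_⟩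
  · exact huC.mono (Set.inter_subset_left.trans interior_subset)
  · -- derivative at 0
    have hd := (hstrict.to_implicitFunctionOfComplemented hr hker).hasFDerivAt
    rw [h0] at hd
    exact hd
  · -- injectivity
    intro k₁ hk₁ k₂ hk₂ hk
    have := ψ.symm.injOn hk₁.2 hk₂.2 hk
    simpa using this
  · -- image
    ext p
    constructor
    · rintro ⟨k, hk, rfl⟩
      have hT : ((0 : X), k) ∈ ψ.target := hk.2
      have hS : φ k ∈ ψ.source := ψ.map_target hT
      have hri : ψ (φ k) = (0, k) := ψ.right_inv hT
      refine ⟨⟨hS, ?_⟩, ?_⟩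
      · show (ψ (φ k)).2 ∈ W
        rw [hri]; exact hk
      · have : h (φ k) = 0 := by
          have : (ψ (φ k)).1 = h (φ k) := rfl
          rw [hri] at this; exact this.symm
        exact sub_eq_zero.mp this
    · rintro ⟨⟨hS, hW⟩, hfg⟩
      have hhp : h p = 0 := sub_eq_zero.mpr hfg
      have h1 : (ψ p).1 = h p := rfl
      have hψp : ψ p = ((0 : X), (ψ p).2) := by
        rw [← hhp, ← h1]
      refine ⟨(ψ p).2, hW, ?_⟩
      show ψ.symm ((0 : X), (ψ p).2) = p
      rw [← hψp]
      exact ψ.left_inv hS
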